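/- Let V̄ be the fixed point of Π ∘ T where T(f) = g + γ P f with contraction factor γ ∈ (0,1) on L²(ξ) (P non-expansive, Π orthogonal projection onto closed subspace K), and let V° be the fixed point of T. Then ‖V̄ − V°‖²_ξ ≤ (1 − γ²)^{-1} · inf_{f ∈ K} ‖f − V°‖²_ξ. -/

import Mathlib

open scoped RealInnerProductSpace

/-- Tsitsiklis–Van Roy approximation-factor bound: if `v0` is the fixed point
of the `γ`-contraction `T f = g + γ • P f` (with `P` non-expansive on the Hilbert space `H`)
and `vb` is the fixed point of `Π_K ∘ T`, then
`‖vb − v0‖² ≤ (1 − γ²)⁻¹ · inf_{f ∈ K} ‖f − v0‖²`. -/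
theorem stmt3 {H : Type*} [NormedAddCommGroup H] [InnerProductSpace ℝ H] [CompleteSpace H]
    (P : H →L[ℝ] H) (hP : ∀ h, ‖P h‖ ≤ ‖h‖)
    (K : Submodule ℝ H) [CompleteSpace K] (g : H) (γ : ℝ) (hγ0 : 0 < γ) (hγ1 : γ < 1)
    (v0 vb : H) (hv0 : v0 = g + γ • P v0)
    (hvb : vb = (Submodule.orthogonalProjection K (g + γ • P vb) : H)) :
    ‖vb - v0‖ ^ 2 ≤ (1 - γ ^ 2)⁻¹ * ⨅ f : K, ‖(f : H) - v0‖ ^ 2 := by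
  set p : H := (Submodule.orthogonalProjection K v0 : H) with hp
  -- Pythagoras: vb - p ∈ K, p - v0 ⊥ K
  have hperp : (inner ℝ (vb - p) (p - v0) : ℝ) = 0 := by
    rw [← neg_sub v0 p, inner_neg_right, ← inner_conj_symm]
    simp only [RCLike.star_def, conj_trivial, neg_eq_zero]
    exact Submodule.starProjection_inner_eq_zero (K := K) v0 (vb - p)
      (Submodule.sub_mem K (hvb ▸ Submodule.coe_mem _) (Submodule.coe_mem _))
  have hpyth : ‖vb - v0‖ ^ 2 = ‖vb - p‖ ^ 2 + ‖p - v0‖ ^ 2 := by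
    have := norm_add_sq_real (vb - p) (p - v0)
    rw [hperp] at this
    simpa [sub_add_sub_cancel] using this
  -- contraction step
  have hcontr : ‖vb - p‖ ≤ γ * ‖vb - v0‖ := by
    have heq : vb - p = (Submodule.orthogonalProjection K ((g + γ • P vb) - (g + γ • P v0)) : H) := by
      rw [map_sub]
      push_cast
      rw [hvb, hp, ← hvb]
      congr 1
      rw [← hv0]
    have : (g + γ • P vb) - (g + γ • P v0) = γ • P (vb - v0) := by
      rw [map_sub]; module
    rw [heq, this]
    calc ‖(Submodule.orthogonalProjection K (γ • P (vb - v0)) : H)‖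
        ≤ ‖γ • P (vb - v0)‖ := by
          have h1 := (Submodule.orthogonalProjection K).le_opNorm (γ • P (vb - v0))
          have h2 := Submodule.orthogonalProjection_norm_le K
          calc ‖(Submodule.orthogonalProjection K (γ • P (vb - v0)) : H)‖
              = ‖Submodule.orthogonalProjection K (γ • P (vb - v0))‖ := by
                rw [Submodule.norm_coe]
            _ ≤ ‖Submodule.orthogonalProjection K‖ * ‖γ • P (vb - v0)‖ := h1
            _ ≤ 1 * ‖γ • P (vb - v0)‖ := by
                exact mul_le_mul_of_nonneg_right h2 (norm_nonneg _)
            _ = ‖γ • P (vb - v0)‖ := one_mul _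
      _ = γ * ‖P (vb - v0)‖ := by
          rw [norm_smul, Real.norm_eq_abs, abs_of_pos hγ0]
      _ ≤ γ * ‖vb - v0‖ := mul_le_mul_of_nonneg_left (hP _) hγ0.le
  have hcontr2 : ‖vb - p‖ ^ 2 ≤ γ ^ 2 * ‖vb - v0‖ ^ 2 := by
    have := pow_le_pow_left₀ (norm_nonneg _) hcontr 2
    calc ‖vb - p‖ ^ 2 ≤ (γ * ‖vb - v0‖) ^ 2 := this
      _ = γ ^ 2 * ‖vb - v0‖ ^ 2 := by ring
  have hkey : (1 - γ ^ 2) * ‖vb - v0‖ ^ 2 ≤ ‖p - v0‖ ^ 2 := by nlinarith [hpyth, hcontr2]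
  have hinf : ‖p - v0‖ ^ 2 ≤ ⨅ f : K, ‖(f : H) - v0‖ ^ 2 := by
    apply le_ciInf
    intro f
    have : ‖p - v0‖ ≤ ‖(f : H) - v0‖ := by
      rw [norm_sub_rev, norm_sub_rev (f : H)]
      calc ‖v0 - p‖ = ⨅ x : K, ‖v0 - x‖ := Submodule.starProjection_minimal (U := K) v0
        _ ≤ ‖v0 - f‖ := ciInf_le ⟨0, fun _ ⟨x, hx⟩ => hx ▸ norm_nonneg _⟩ f
    exact pow_le_pow_left₀ (norm_nonneg _) this 2
  have hγ2 : 0 < 1 - γ ^ 2 := by nlinarith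
  calc ‖vb - v0‖ ^ 2 = (1 - γ ^ 2)⁻¹ * ((1 - γ ^ 2) * ‖vb - v0‖ ^ 2) := by
        field_simp
    _ ≤ (1 - γ ^ 2)⁻¹ * ‖p - v0‖ ^ 2 :=
        mul_le_mul_of_nonneg_left hkey (by positivity)
    _ ≤ (1 - γ ^ 2)⁻¹ * ⨅ f : K, ‖(f : H) - v0‖ ^ 2 :=
        mul_le_mul_of_nonneg_left hinf (by positivity)
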